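/- Let n, r be integers with 1 < n/2 < r < n and set a = n/r. Then (n+1)(a^n - (a-1)^n) > (n+1-a)a^n + (a-1)^{n+1}. -/

import Mathlib

lemma nat_key (n k : ℕ) (hk : 1 ≤ k) (hn : 2 * k + 1 ≤ n) :
    (n + 1) * k ^ n < n ^ n := by
  have hn0 : n ≠ 0 := by omega
  calc (n + 1) * k ^ n ≤ 2 ^ n * k ^ n := by
        have : n + 1 ≤ 2 ^ n := Nat.succ_le_of_lt (Nat.lt_two_pow_self (n := n))
        exact Nat.mul_le_mul_right _ this
    _ = (2 * k) ^ n := by rw [mul_pow]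
    _ < (2 * k + 1) ^ n := Nat.pow_lt_pow_left (by omega) hn0
    _ ≤ n ^ n := Nat.pow_le_pow_left hn _

/-- For integers `n, r` with `1 < n/2 < r < n` and `a = n/r`, one has
`(n+1)(a^n - (a-1)^n) > (n+1-a)a^n + (a-1)^(n+1)`. -/
theorem stmt_4 (n r : ℕ) (h1 : (1 : ℚ) < (n : ℚ) / 2) (h2 : (n : ℚ) / 2 < r) (h3 : r < n) :
    ((n : ℚ) + 1 - (n : ℚ) / r) * ((n : ℚ) / r) ^ n + ((n : ℚ) / r - 1) ^ (n + 1) <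
      ((n : ℚ) + 1) * (((n : ℚ) / r) ^ n - ((n : ℚ) / r - 1) ^ n) := by
  have hrQ : (1 : ℚ) < r := h1.trans h2
  have hq : (0 : ℚ) < r := by linarith
  have hr0 : (r : ℚ) ≠ 0 := ne_of_gt hq
  have hNR : (r : ℚ) < n := by exact_mod_cast h3
  have hn2 : (2 : ℚ) < n := by linarith
  -- natural number facts
  have hrn : r < n := h3
  have h2r : n < 2 * r := by
    have : (n : ℚ) < 2 * r := by linarith
    exact_mod_cast this
  have hk1 : 1 ≤ n - r := by omega
  have hkn : 2 * (n - r) + 1 ≤ n := by omega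
  have hnat : (n + 1) * (n - r) ^ n < n ^ n := nat_key n (n - r) hk1 hkn
  have hnat' : (r + 1) * (n - r) ^ n < n ^ n :=
    lt_of_le_of_lt (Nat.mul_le_mul_right _ (by omega)) hnat
  have hkey : ((r : ℚ) + 1) * ((n : ℚ) - r) ^ n < (n : ℚ) ^ n := by
    have := (Nat.cast_lt (α := ℚ)).mpr hnat'
    push_cast [Nat.cast_sub hrn.le] at this
    convert this using 2
  have hid : ((n : ℚ) + 1) * (((n : ℚ) / r) ^ n - ((n : ℚ) / r - 1) ^ n) -
      ((((n : ℚ) + 1 - (n : ℚ) / r) * ((n : ℚ) / r) ^ n + ((n : ℚ) / r - 1) ^ (n + 1))) =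
      (n : ℚ) / (r : ℚ) ^ (n + 1) * ((n : ℚ) ^ n - ((r : ℚ) + 1) * ((n : ℚ) - r) ^ n) := by
    have hsub : (n : ℚ) / r - 1 = ((n : ℚ) - r) / r := by field_simp
    rw [hsub, div_pow, div_pow, div_pow]
    field_simp
    ring
  have hpos : 0 < (n : ℚ) / (r : ℚ) ^ (n + 1) *
      ((n : ℚ) ^ n - ((r : ℚ) + 1) * ((n : ℚ) - r) ^ n) := by
    apply mul_pos
    · positivity
    · linarith
  linarith [hid, hpos]
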